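/- Let A0 be symmetric positive definite, and let (K_P) be a finite family of matrices each symmetrizable by A0 (i.e., A0·K_P symmetric for all P). If the only vector v satisfying K_P⁺ v = 0 for all P is v = 0, then the matrix N⁻¹ = Σ_P K_P⁺ is invertible. -/

import Mathlib

open Matrix

/-- `Mp` is a positive part of `M`: for some diagonalization `M = P D P⁻¹`,
`Mp = P D⁺ P⁻¹` where `D⁺` replaces each diagonal entry by its positive part. -/
def Matrix.IsPosPartOf {m : ℕ} (M Mp : Matrix (Fin m) (Fin m) ℝ) : Prop :=
  ∃ P D : Matrix (Fin m) (Fin m) ℝ, IsUnit P ∧ D.IsDiag ∧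
    M = P * D * P⁻¹ ∧ Mp = P * (Matrix.of fun i j => max (D i j) 0) * P⁻¹

/-- Key lemma: if `A0` is symmetric positive definite and `A0 * M` is symmetric, then any
positive part `Mp` of `M` is positive semidefinite with respect to the `A0` inner product,
and vanishing of the quadratic form forces `Mp *ᵥ x = 0`. -/
lemma aux_posPart {m : ℕ} (A0 : Matrix (Fin m) (Fin m) ℝ) (hA0sym : A0.IsSymm)
    (hA0pd : A0.PosDef) (M Mp : Matrix (Fin m) (Fin m) ℝ)
    (hsym : (A0 * M).IsSymm) (hpos : M.IsPosPartOf Mp) (x : Fin m → ℝ) :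
    0 ≤ x ⬝ᵥ (A0 *ᵥ (Mp *ᵥ x)) ∧ (x ⬝ᵥ (A0 *ᵥ (Mp *ᵥ x)) = 0 → Mp *ᵥ x = 0) := by
  obtain ⟨P, D, hP, hD, hM, hMp⟩ := hpos
  have hPdet : IsUnit P.det := (isUnit_iff_isUnit_det P).1 hP
  have hD' : D = diagonal (fun i => D i i) := (hD.diagonal_diag).symm
  -- replace x by P *ᵥ y
  obtain ⟨y, rfl⟩ : ∃ y, x = P *ᵥ y := by
    refine ⟨P⁻¹ *ᵥ x, ?_⟩
    rw [mulVec_mulVec, mul_nonsing_inv P hPdet, one_mulVec]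
  set d : Fin m → ℝ := fun i => D i i with hd
  have hDp : (Matrix.of fun i j => max (D i j) 0) = diagonal (fun i => max (d i) 0) := by
    ext i j
    by_cases h : i = j
    · subst h; simp [diagonal, hd]
    · simp [diagonal, h, hD h]
  -- G = Pᵀ * A0 * P is symmetric positive definite
  have hPinj : Function.Injective P.mulVec := mulVec_injective_iff_isUnit.2 hP
  have hGsymm : (Pᵀ * A0 * P)ᵀ = Pᵀ * A0 * P := by
    rw [transpose_mul, transpose_mul, transpose_transpose, hA0sym.eq, Matrix.mul_assoc]
  -- auxiliary dot-product identity
  have hdot : ∀ (u z : Fin m → ℝ) (N : Matrix (Fin m) (Fin m) ℝ),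
      (P *ᵥ u) ⬝ᵥ (N *ᵥ z) = u ⬝ᵥ ((Pᵀ * N) *ᵥ z) := by
    intro u z N
    rw [dotProduct_mulVec, dotProduct_mulVec, ← vecMul_vecMul, vecMul_transpose]
  have hGpd : (Pᵀ * A0 * P).PosDef := by
    refine posDef_iff_dotProduct_mulVec.2 ⟨by unfold IsHermitian; rw [conjTranspose_eq_transpose_of_trivial]; exact hGsymm, fun u hu => ?_⟩
    have hPu : P *ᵥ u ≠ 0 := by
      intro h
      exact hu (hPinj (by simpa using h))
    have h1 := hA0pd.dotProduct_mulVec_pos hPu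
    rw [star_trivial] at h1 ⊢
    have h2 : (P *ᵥ u) ⬝ᵥ (A0 *ᵥ (P *ᵥ u)) = u ⬝ᵥ ((Pᵀ * A0) *ᵥ (P *ᵥ u)) := hdot u (P *ᵥ u) A0
    rw [h2, mulVec_mulVec] at h1
    exact h1
  -- G * D is symmetric, hence G is block diagonal w.r.t. eigenvalue classes
  have hGD : (Pᵀ * A0 * P * D)ᵀ = Pᵀ * A0 * P * D := by
    have h1 : P * D = M * P := by
      rw [hM, Matrix.mul_assoc, Matrix.mul_assoc, nonsing_inv_mul P hPdet, Matrix.mul_one]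
    have h2 : Pᵀ * A0 * P * D = Pᵀ * (A0 * M) * P := by
      simp only [Matrix.mul_assoc, h1]
    rw [h2, transpose_mul, transpose_mul, transpose_transpose, hsym.eq]
    simp only [Matrix.mul_assoc]
  have hblock : ∀ i j, (Pᵀ * A0 * P) i j * d j = (Pᵀ * A0 * P) i j * d i := by
    intro i j
    have h1 : (Pᵀ * A0 * P * D) j i = (Pᵀ * A0 * P * D) i j := by
      have h := congrFun (congrFun hGD i) j
      simpa [Matrix.transpose_apply] using h
    have hGs : (Pᵀ * A0 * P) j i = (Pᵀ * A0 * P) i j := by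
      have h := congrFun (congrFun hGsymm i) j
      simpa [Matrix.transpose_apply] using h
    rw [hD'] at h1
    simp only [Matrix.mul_diagonal] at h1
    rw [hGs] at h1
    exact h1.symm
  -- the square-root trick
  set s : Fin m → ℝ := fun i => Real.sqrt (max (d i) 0) with hs
  have hss : ∀ i, s i * s i = max (d i) 0 := fun i =>
    Real.mul_self_sqrt (le_max_right _ _)
  have hterm : ∀ i j, (Pᵀ * A0 * P) i j * max (d j) 0 = s i * (Pᵀ * A0 * P) i j * s j := by
    intro i j
    by_cases h : (Pᵀ * A0 * P) i j = 0
    · simp [h]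
    · have hdij : d j = d i := mul_left_cancel₀ h (hblock i j)
      have hsij : s j = s i := by simp only [hs, hdij]
      rw [hsij, hdij, ← hss i]
      ring
  -- rewrite the quadratic form
  have hMpx : Mp *ᵥ (P *ᵥ y) = P *ᵥ (fun i => max (d i) 0 * y i) := by
    have hPP : P⁻¹ *ᵥ (P *ᵥ y) = y := by
      rw [mulVec_mulVec, nonsing_inv_mul P hPdet, one_mulVec]
    have hdiag : diagonal (fun i => max (d i) 0) *ᵥ y = fun i => max (d i) 0 * y i := by
      funext i
      rw [mulVec_diagonal]
    rw [hMp, hDp, ← Matrix.mulVec_mulVec, hPP, ← Matrix.mulVec_mulVec, hdiag]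
  have hquad : (P *ᵥ y) ⬝ᵥ (A0 *ᵥ (Mp *ᵥ (P *ᵥ y)))
      = (fun i => s i * y i) ⬝ᵥ ((Pᵀ * A0 * P) *ᵥ (fun i => s i * y i)) := by
    rw [hMpx, mulVec_mulVec, hdot y _ (A0 * P), ← Matrix.mul_assoc]
    simp only [dotProduct, mulVec, dotProduct]
    refine Finset.sum_congr rfl fun i _ => ?_
    rw [Finset.mul_sum, Finset.mul_sum]
    refine Finset.sum_congr rfl fun j _ => ?_
    have h := hterm i j
    calc y i * ((Pᵀ * A0 * P) i j * (max (d j) 0 * y j))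
        = y i * (((Pᵀ * A0 * P) i j * max (d j) 0) * y j) := by ring
      _ = y i * ((s i * (Pᵀ * A0 * P) i j * s j) * y j) := by rw [h]
      _ = (s i * y i) * ((Pᵀ * A0 * P) i j * (s j * y j)) := by ring
  constructor
  · rw [hquad]
    have h := hGpd.posSemidef.dotProduct_mulVec_nonneg (fun i => s i * y i)
    rw [star_trivial] at h
    exact h
  · intro h0
    rw [hquad] at h0
    have hw0 : (fun i => s i * y i) = (0 : Fin m → ℝ) := by
      by_contra hne
      have h := hGpd.dotProduct_mulVec_pos hne
      rw [star_trivial, h0] at h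
      exact lt_irrefl 0 h
    have hmy : ∀ i, max (d i) 0 * y i = 0 := by
      intro i
      have hwi : s i * y i = 0 := congrFun hw0 i
      rcases mul_eq_zero.1 hwi with h | h
      · have hmax : max (d i) 0 = 0 := (Real.sqrt_eq_zero (le_max_right _ _)).1 h
        rw [hmax, zero_mul]
      · rw [h, mul_zero]
    rw [hMpx]
    have hfun : (fun i => max (d i) 0 * y i) = (0 : Fin m → ℝ) := funext hmy
    rw [hfun, mulVec_zero]

theorem stmt2 {m : ℕ} {ι : Type*} [Fintype ι]
    (A0 : Matrix (Fin m) (Fin m) ℝ) (hA0sym : A0.IsSymm) (hA0pd : A0.PosDef)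
    (K Kp : ι → Matrix (Fin m) (Fin m) ℝ)
    (hsym : ∀ P, (A0 * K P).IsSymm)
    (hpos : ∀ P, (K P).IsPosPartOf (Kp P))
    (hker : ∀ v : Fin m → ℝ, (∀ P, Kp P *ᵥ v = 0) → v = 0) :
    IsUnit (∑ P, Kp P) := by
  rw [isUnit_iff_isUnit_det, isUnit_iff_ne_zero]
  intro hdet
  obtain ⟨v, hv, hv0⟩ := (Matrix.exists_mulVec_eq_zero_iff).2 hdet
  have hterms : ∀ P : ι, 0 ≤ v ⬝ᵥ (A0 *ᵥ (Kp P *ᵥ v)) :=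
    fun P => (aux_posPart A0 hA0sym hA0pd (K P) (Kp P) (hsym P) (hpos P) v).1
  have h1 : (∑ P : ι, Kp P) *ᵥ v = ∑ P : ι, Kp P *ᵥ v :=
    map_sum (AddMonoidHom.mk' (fun N : Matrix (Fin m) (Fin m) ℝ => N *ᵥ v)
      fun A B => add_mulVec A B v) Kp Finset.univ
  have h2 : A0 *ᵥ (∑ P : ι, Kp P *ᵥ v) = ∑ P : ι, A0 *ᵥ (Kp P *ᵥ v) :=
    map_sum (AddMonoidHom.mk' (fun z : Fin m → ℝ => A0 *ᵥ z)
      fun a b => mulVec_add A0 a b) _ Finset.univ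
  have h3 : v ⬝ᵥ (∑ P : ι, A0 *ᵥ (Kp P *ᵥ v)) = ∑ P : ι, v ⬝ᵥ (A0 *ᵥ (Kp P *ᵥ v)) :=
    map_sum (AddMonoidHom.mk' (fun z : Fin m → ℝ => v ⬝ᵥ z)
      fun a b => dotProduct_add v a b) _ Finset.univ
  have hsum : ∑ P : ι, v ⬝ᵥ (A0 *ᵥ (Kp P *ᵥ v)) = 0 := by
    rw [← h3, ← h2, ← h1, hv0, mulVec_zero, dotProduct_zero]
  have heach : ∀ P ∈ Finset.univ, v ⬝ᵥ (A0 *ᵥ (Kp P *ᵥ v)) = 0 :=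
    (Finset.sum_eq_zero_iff_of_nonneg (fun P _ => hterms P)).1 hsum
  have hKpv : ∀ P : ι, Kp P *ᵥ v = 0 := fun P =>
    (aux_posPart A0 hA0sym hA0pd (K P) (Kp P) (hsym P) (hpos P) v).2
      (heach P (Finset.mem_univ P))
  exact hv (hker v hKpv)
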